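/- The sequence (U_n)_{n≥1} is strongly (S)-convergent if and only if for every b ∈ C_c(ℝ^D) there exists \bar{b} ∈ L^∞(Q) such that for every w ∈ W, (1/w_N) Σ_{n=1}^N w(n/N) b(U_n) → \bar{b} strongly in L¹(Q) as N → ∞, with the limit \bar{b} independent of the choice of w ∈ W. -/

import Mathlib

open MeasureTheory Filter Topology

noncomputable section

/-- The class `W` of weight functions: `w ∈ C¹([0,1])`, `w ≥ 0` on `[0,1]`,
`∫_0^1 w(z) dz = 1`. -/
def IsWeight (w : ℝ → ℝ) : Prop :=
  ContDiffOn ℝ 1 w (Set.Icc 0 1) ∧ (∀ z ∈ Set.Icc (0 : ℝ) 1, 0 ≤ w z) ∧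
    (∫ z in (0 : ℝ)..1, w z) = 1

/-- `w_N = ∑_{n=1}^N w(n/N)`. -/
def wsum (w : ℝ → ℝ) (N : ℕ) : ℝ := ∑ n ∈ Finset.Icc 1 N, w ((n : ℝ) / (N : ℝ))

open RealInnerProductSpace

section Aux

variable {α : Type*} [MeasurableSpace α] {μ : MeasureTheory.Measure α}

lemma weight_div_nonneg {w : ℝ → ℝ} (hw : IsWeight w) {n N : ℕ} (hn : n ∈ Finset.Icc 1 N) :
    0 ≤ w ((n : ℝ) / (N : ℝ)) := by
  rcases Finset.mem_Icc.mp hn with ⟨h1, h2⟩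
  have hN : 0 < (N : ℝ) := by
    have : (1 : ℕ) ≤ N := le_trans h1 h2
    exact_mod_cast Nat.lt_of_lt_of_le Nat.zero_lt_one this
  refine hw.2.1 _ ⟨div_nonneg (Nat.cast_nonneg n) hN.le, (div_le_one hN).mpr ?_⟩
  exact_mod_cast h2

lemma wsum_nonneg {w : ℝ → ℝ} (hw : IsWeight w) (N : ℕ) : 0 ≤ wsum w N :=
  Finset.sum_nonneg fun _ hn => weight_div_nonneg hw hn

lemma afun_bound {w : ℝ → ℝ} (hw : IsWeight w) {C : ℝ} (hC : 0 ≤ C)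
    {f : ℕ → α → ℝ} (hf : ∀ n y, |f n y| ≤ C) (N : ℕ) (y : α) :
    |(wsum w N)⁻¹ * ∑ n ∈ Finset.Icc 1 N, w ((n : ℝ) / (N : ℝ)) * f n y| ≤ C := by
  rcases eq_or_lt_of_le (wsum_nonneg hw N) with h0 | hpos
  · rw [← h0]
    simpa using hC
  · have hsum : |∑ n ∈ Finset.Icc 1 N, w ((n : ℝ) / (N : ℝ)) * f n y| ≤ wsum w N * C := by
      calc |∑ n ∈ Finset.Icc 1 N, w ((n : ℝ) / (N : ℝ)) * f n y|
          ≤ ∑ n ∈ Finset.Icc 1 N, |w ((n : ℝ) / (N : ℝ)) * f n y| :=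
            Finset.abs_sum_le_sum_abs _ _
        _ ≤ ∑ n ∈ Finset.Icc 1 N, w ((n : ℝ) / (N : ℝ)) * C := by
            refine Finset.sum_le_sum fun n hn => ?_
            rw [abs_mul, abs_of_nonneg (weight_div_nonneg hw hn)]
            exact mul_le_mul_of_nonneg_left (hf n y) (weight_div_nonneg hw hn)
        _ = wsum w N * C := by rw [wsum, Finset.sum_mul]
    rw [abs_mul, abs_of_nonneg (inv_nonneg.mpr hpos.le)]
    calc (wsum w N)⁻¹ * |∑ n ∈ Finset.Icc 1 N, w ((n : ℝ) / (N : ℝ)) * f n y|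
        ≤ (wsum w N)⁻¹ * (wsum w N * C) :=
          mul_le_mul_of_nonneg_left hsum (inv_nonneg.mpr hpos.le)
      _ = C := by field_simp

lemma isWeight_one : IsWeight (fun _ : ℝ => (1 : ℝ)) :=
  ⟨contDiffOn_const, fun _ _ => zero_le_one, by simp⟩

lemma tendsto_abs_sub_lt {u : ℕ → ℝ} {L δ : ℝ} (h : Tendsto u atTop (𝓝 L)) (hδ : 0 < δ) :
    ∀ᶠ K in atTop, |u K - L| < δ := by
  rcases Metric.tendsto_atTop.mp h δ hδ with ⟨N, hN⟩
  exact eventually_atTop.mpr ⟨N, fun K hK => by simpa [Real.dist_eq] using hN K hK⟩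

lemma Lp_coeFn_finset_sum {E : Type*} [NormedAddCommGroup E] {p : ENNReal} {ι : Type*}
    (s : Finset ι) (F : ι → MeasureTheory.Lp E p μ) :
    ⇑(∑ i ∈ s, F i) =ᵐ[μ] fun y => ∑ i ∈ s, F i y := by
  classical
  induction s using Finset.cons_induction with
  | empty => simp only [Finset.sum_empty]; exact MeasureTheory.Lp.coeFn_zero E p μ
  | cons a s ha ih =>
    rw [Finset.sum_cons]
    filter_upwards [MeasureTheory.Lp.coeFn_add (F a) (∑ i ∈ s, F i), ih] with y h1 h2
    simp only [Finset.sum_cons, h1, Pi.add_apply, h2]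

lemma integral_abs_le_dist [IsFiniteMeasure μ] (f g : MeasureTheory.Lp ℝ 2 μ) :
    ∫ y, |f y - g y| ∂μ ≤ dist f g * ((μ Set.univ) ^ ((1 : ℝ) / 2)).toReal := by
  have hsm : AEStronglyMeasurable (⇑f - ⇑g) μ :=
    (Lp.aestronglyMeasurable f).sub (Lp.aestronglyMeasurable g)
  have h1 : ∫ y, |f y - g y| ∂μ = (eLpNorm (⇑f - ⇑g) 1 μ).toReal := by
    rw [eLpNorm_one_eq_lintegral_enorm]
    have := integral_norm_eq_lintegral_enorm hsm
    simpa [Real.norm_eq_abs] using this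
  have h4 : eLpNorm (⇑f - ⇑g) 2 μ ≠ ⊤ := by
    rw [← eLpNorm_congr_ae (Lp.coeFn_sub f g)]
    exact Lp.eLpNorm_ne_top _
  have h2 : eLpNorm (⇑f - ⇑g) 1 μ ≤ eLpNorm (⇑f - ⇑g) 2 μ * (μ Set.univ) ^ ((1 : ℝ) / 2) := by
    have := eLpNorm_le_eLpNorm_mul_rpow_measure_univ (p := 1) (q := 2)
      (by norm_num) hsm (μ := μ)
    norm_num at this
    exact this
  have h3 : (eLpNorm (⇑f - ⇑g) 2 μ).toReal = dist f g := by
    rw [Lp.dist_def]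
  have hfin : eLpNorm (⇑f - ⇑g) 2 μ * (μ Set.univ) ^ ((1 : ℝ) / 2) ≠ ⊤ :=
    ENNReal.mul_ne_top h4 (ENNReal.rpow_ne_top_of_nonneg (by norm_num) (measure_ne_top μ _))
  rw [h1, ← h3, ← ENNReal.toReal_mul]
  exact ENNReal.toReal_mono hfin h2

lemma expand_aux (w : ℝ → ℝ) (N : ℕ) (f : ℕ → α → ℝ) (g : α → ℝ)
    (hfg : ∀ n, Integrable (fun y => f n y * g y) μ) :
    (wsum w N)⁻¹ * ∑ n ∈ Finset.Icc 1 N, w ((n : ℝ) / (N : ℝ)) * ∫ y, f n y * g y ∂μ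
      = ∫ y, ((wsum w N)⁻¹ *
          ∑ n ∈ Finset.Icc 1 N, w ((n : ℝ) / (N : ℝ)) * f n y) * g y ∂μ := by
  have h1 : ∀ y, ((wsum w N)⁻¹ * ∑ n ∈ Finset.Icc 1 N, w ((n : ℝ) / (N : ℝ)) * f n y) * g y
      = (wsum w N)⁻¹ * ∑ n ∈ Finset.Icc 1 N, w ((n : ℝ) / (N : ℝ)) * (f n y * g y) := by
    intro y
    rw [mul_assoc, Finset.sum_mul]
    congr 1
    exact Finset.sum_congr rfl fun n _ => by ring
  simp_rw [h1]
  rw [integral_const_mul, integral_finset_sum _ fun n _ => (hfg n).const_mul _]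
  congr 1
  exact Finset.sum_congr rfl fun n _ => by rw [integral_const_mul]

end Aux

/-- Strong (S)-convergence of a sequence `(U_n)_{n ≥ 1}` of measurable functions `Q → ℝ^D`:
for every `b ∈ C_c(ℝ^D)`, (i) the weighted correlation limits
`ℓ m = lim_N (1/w_N) ∑_{n=1}^N w(n/N) ∫_Q b(U_n) b(U_m)` exist for every fixed `m ≥ 1` and
every `w ∈ W`, independently of `w`, and (ii) for every `w ∈ W`,
`lim_N (1/w_N²) ∑_{n,m=1}^N w(n/N) w(m/N) ∫_Q b(U_n) b(U_m)
  = lim_M (1/w_M) ∑_{m=1}^M w(m/M) ℓ m` (both limits existing). -/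
def StronglySConv {M D : ℕ} (Q : Set (Fin M → ℝ))
    (U : ℕ → (Fin M → ℝ) → EuclideanSpace ℝ (Fin D)) : Prop :=
  ∀ b : EuclideanSpace ℝ (Fin D) → ℝ, Continuous b → HasCompactSupport b →
    ∃ ℓ : ℕ → ℝ,
      (∀ w : ℝ → ℝ, IsWeight w → ∀ m : ℕ, 1 ≤ m →
        Tendsto (fun N : ℕ => (wsum w N)⁻¹ *
            ∑ n ∈ Finset.Icc 1 N, w ((n : ℝ) / (N : ℝ)) * ∫ y in Q, b (U n y) * b (U m y))
          atTop (𝓝 (ℓ m))) ∧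
      (∀ w : ℝ → ℝ, IsWeight w → ∃ L : ℝ,
        Tendsto (fun N : ℕ => ((wsum w N) ^ 2)⁻¹ *
            ∑ n ∈ Finset.Icc 1 N, ∑ m ∈ Finset.Icc 1 N,
              w ((n : ℝ) / (N : ℝ)) * w ((m : ℝ) / (N : ℝ)) *
                ∫ y in Q, b (U n y) * b (U m y)) atTop (𝓝 L) ∧
        Tendsto (fun K : ℕ => (wsum w K)⁻¹ *
            ∑ m ∈ Finset.Icc 1 K, w ((m : ℝ) / (K : ℝ)) * ℓ m) atTop (𝓝 L))

/-- Theorem 2.1 (ii): `(U_n)` is strongly (S)-convergent iff for every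
`b ∈ C_c(ℝ^D)` there exists `b̄ ∈ L^∞(Q)` such that for every `w ∈ W` the weighted averages
`(1/w_N) ∑_{n=1}^N w(n/N) b(U_n)` converge strongly in `L¹(Q)` to `b̄`, the limit being
independent of `w`. -/
theorem stmt4 {M D : ℕ} (Q : Set (Fin M → ℝ)) (hQm : MeasurableSet Q)
    (hQfin : volume Q < ⊤)
    (U : ℕ → (Fin M → ℝ) → EuclideanSpace ℝ (Fin D)) (hU : ∀ n, Measurable (U n)) :
    StronglySConv Q U ↔
      (∀ b : EuclideanSpace ℝ (Fin D) → ℝ, Continuous b → HasCompactSupport b →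
        ∃ bbar : (Fin M → ℝ) → ℝ, Measurable bbar ∧ (∃ C : ℝ, ∀ y, |bbar y| ≤ C) ∧
          ∀ w : ℝ → ℝ, IsWeight w →
            Tendsto (fun N : ℕ =>
                ∫ y in Q, |(wsum w N)⁻¹ *
                    (∑ n ∈ Finset.Icc 1 N, w ((n : ℝ) / (N : ℝ)) * b (U n y)) - bbar y|)
              atTop (𝓝 0)) := by
  haveI : IsFiniteMeasure (volume.restrict Q) :=
    ⟨by rw [Measure.restrict_apply_univ]; exact hQfin⟩
  constructor
  · -- forward direction
    intro hS b hbc hbs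
    obtain ⟨C₀, hC₀⟩ := hbs.exists_bound_of_continuous hbc
    set C : ℝ := max C₀ 0 with hCdef
    have hC0 : (0 : ℝ) ≤ C := le_max_right _ _
    have hCb : ∀ x, |b x| ≤ C := fun x =>
      le_trans (by simpa [Real.norm_eq_abs] using hC₀ x) (le_max_left _ _)
    have hfm : ∀ n, Measurable (fun y => b (U n y)) := fun n => hbc.measurable.comp (hU n)
    have hfL : ∀ n, MemLp (fun y => b (U n y)) 2 (volume.restrict Q) := fun n =>
      MemLp.of_bound (hfm n).aestronglyMeasurable C
        (ae_of_all _ fun y => by simpa [Real.norm_eq_abs] using hCb (U n y))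
    set F : ℕ → Lp ℝ 2 (volume.restrict Q) := fun n => (hfL n).toLp _ with hFdef
    obtain ⟨ℓ, h1, h2⟩ := hS b hbc hbs
    set Avg : (ℝ → ℝ) → ℕ → Lp ℝ 2 (volume.restrict Q) :=
      fun w N => (wsum w N)⁻¹ • ∑ n ∈ Finset.Icc 1 N, w ((n : ℝ) / (N : ℝ)) • F n with hAvgdef
    have hinner : ∀ n m : ℕ, ⟪F n, F m⟫ = ∫ y in Q, b (U n y) * b (U m y) := by
      intro n m
      rw [MeasureTheory.L2.inner_def]
      apply integral_congr_ae
      filter_upwards [(hfL n).coeFn_toLp, (hfL m).coeFn_toLp] with y e1 e2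
      simp only [hFdef, e1, e2, RCLike.inner_apply, conj_trivial]; ring
    have hAvgInner : ∀ (w : ℝ → ℝ) (N : ℕ) (g : Lp ℝ 2 (volume.restrict Q)),
        ⟪Avg w N, g⟫ = (wsum w N)⁻¹ *
          ∑ n ∈ Finset.Icc 1 N, w ((n : ℝ) / (N : ℝ)) * ⟪F n, g⟫ := by
      intro w N g
      simp only [hAvgdef]
      rw [real_inner_smul_left, sum_inner]
      congr 1
      exact Finset.sum_congr rfl fun n _ => real_inner_smul_left _ _ _
    have hAvgFm : ∀ (w : ℝ → ℝ) (N m : ℕ),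
        ⟪Avg w N, F m⟫ = (wsum w N)⁻¹ *
          ∑ n ∈ Finset.Icc 1 N, w ((n : ℝ) / (N : ℝ)) * ∫ y in Q, b (U n y) * b (U m y) := by
      intro w N m
      rw [hAvgInner]
      congr 1
      exact Finset.sum_congr rfl fun n _ => by rw [hinner]
    have hS2 : ∀ (w : ℝ → ℝ) (N : ℕ),
        ((wsum w N) ^ 2)⁻¹ * ∑ n ∈ Finset.Icc 1 N, ∑ m ∈ Finset.Icc 1 N,
            w ((n : ℝ) / (N : ℝ)) * w ((m : ℝ) / (N : ℝ)) *
              ∫ y in Q, b (U n y) * b (U m y) = ‖Avg w N‖ ^ 2 := by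
      intro w N
      rw [← real_inner_self_eq_norm_sq]
      have hsym : ∀ n m : ℕ, (∫ y in Q, b (U n y) * b (U m y))
          = ∫ y in Q, b (U m y) * b (U n y) := fun n m =>
        integral_congr_ae (Filter.Eventually.of_forall fun y => mul_comm _ _)
      calc ((wsum w N) ^ 2)⁻¹ * ∑ n ∈ Finset.Icc 1 N, ∑ m ∈ Finset.Icc 1 N,
              w ((n : ℝ) / (N : ℝ)) * w ((m : ℝ) / (N : ℝ)) *
                ∫ y in Q, b (U n y) * b (U m y)
          = (wsum w N)⁻¹ * ∑ n ∈ Finset.Icc 1 N, w ((n : ℝ) / (N : ℝ)) *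
              ((wsum w N)⁻¹ * ∑ m ∈ Finset.Icc 1 N, w ((m : ℝ) / (N : ℝ)) *
                ∫ y in Q, b (U m y) * b (U n y)) := by
            simp only [Finset.mul_sum]
            refine Finset.sum_congr rfl fun n _ => Finset.sum_congr rfl fun m _ => ?_
            rw [hsym n m]; ring
        _ = (wsum w N)⁻¹ * ∑ n ∈ Finset.Icc 1 N, w ((n : ℝ) / (N : ℝ)) *
              ⟪F n, Avg w N⟫ := by
            congr 1
            refine Finset.sum_congr rfl fun n _ => ?_
            rw [real_inner_comm (Avg w N) (F n), hAvgFm]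
        _ = ⟪Avg w N, Avg w N⟫ := (hAvgInner w N (Avg w N)).symm
    have h1' : ∀ w : ℝ → ℝ, IsWeight w → ∀ m : ℕ, 1 ≤ m →
        Tendsto (fun N => ⟪Avg w N, F m⟫) atTop (𝓝 (ℓ m)) := fun w hw m hm =>
      (h1 w hw m hm).congr fun N => (hAvgFm w N m).symm
    have h2' : ∀ w : ℝ → ℝ, IsWeight w → ∃ L : ℝ,
        Tendsto (fun N => ‖Avg w N‖ ^ 2) atTop (𝓝 L) ∧
        Tendsto (fun K : ℕ => (wsum w K)⁻¹ *
            ∑ m ∈ Finset.Icc 1 K, w ((m : ℝ) / (K : ℝ)) * ℓ m) atTop (𝓝 L) := by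
      intro w hw
      obtain ⟨L, hA, hB⟩ := h2 w hw
      exact ⟨L, hA.congr fun N => hS2 w N, hB⟩
    have hcross : ∀ (w : ℝ → ℝ), IsWeight w → ∀ (w' : ℝ → ℝ), IsWeight w' → ∀ K : ℕ,
        Tendsto (fun N => ⟪Avg w N, Avg w' K⟫) atTop
          (𝓝 ((wsum w' K)⁻¹ * ∑ m ∈ Finset.Icc 1 K, w' ((m : ℝ) / (K : ℝ)) * ℓ m)) := by
      intro w hw w' hw' K
      have heq : ∀ N, ⟪Avg w N, Avg w' K⟫ = (wsum w' K)⁻¹ *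
          ∑ m ∈ Finset.Icc 1 K, w' ((m : ℝ) / (K : ℝ)) * ⟪Avg w N, F m⟫ := by
        intro N
        rw [real_inner_comm, hAvgInner]
        congr 1
        exact Finset.sum_congr rfl fun m _ => by rw [real_inner_comm]
      refine Tendsto.congr (fun N => (heq N).symm) ?_
      exact Tendsto.const_mul _ (tendsto_finset_sum _ fun m hm =>
        ((h1' w hw m (Finset.mem_Icc.mp hm).1).const_mul _))
    have hle : ∀ (w : ℝ → ℝ), IsWeight w → ∀ (w' : ℝ → ℝ), IsWeight w' → ∀ L L' : ℝ,
        Tendsto (fun N => ‖Avg w N‖ ^ 2) atTop (𝓝 L) →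
        Tendsto (fun K => ‖Avg w' K‖ ^ 2) atTop (𝓝 L') →
        Tendsto (fun K : ℕ => (wsum w' K)⁻¹ *
            ∑ m ∈ Finset.Icc 1 K, w' ((m : ℝ) / (K : ℝ)) * ℓ m) atTop (𝓝 L') →
        L' ≤ L := by
      intro w hw w' hw' L L' hL hL' hG
      have step1 : ∀ K, (wsum w' K)⁻¹ *
          ∑ m ∈ Finset.Icc 1 K, w' ((m : ℝ) / (K : ℝ)) * ℓ m
            ≤ (L + ‖Avg w' K‖ ^ 2) / 2 := by
        intro K
        refine le_of_tendsto_of_tendsto' (hcross w hw w' hw' K)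
          ((hL.add_const _).div_const 2) fun N => ?_
        have hcs := real_inner_le_norm (Avg w N) (Avg w' K)
        nlinarith [sq_nonneg (‖Avg w N‖ - ‖Avg w' K‖)]
      have step2 : L' ≤ (L + L') / 2 :=
        le_of_tendsto_of_tendsto' hG ((tendsto_const_nhds.add hL').div_const 2) step1
      linarith
    have hkey : ∀ (w : ℝ → ℝ), IsWeight w → ∀ (w' : ℝ → ℝ), IsWeight w' →
        ∀ ε : ℝ, 0 < ε → ∀ᶠ K in atTop, ∀ᶠ N in atTop, ‖Avg w N - Avg w' K‖ < ε := by
      intro w hw w' hw' ε hε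
      obtain ⟨L, hL, hGw⟩ := h2' w hw
      obtain ⟨L', hL', hGw'⟩ := h2' w' hw'
      have hEq : L' = L := le_antisymm (hle w hw w' hw' L L' hL hL' hGw')
        (hle w' hw' w hw L' L hL' hL hGw)
      subst hEq
      have hδ : (0 : ℝ) < ε ^ 2 / 6 := by positivity
      filter_upwards [tendsto_abs_sub_lt hL' hδ, tendsto_abs_sub_lt hGw' hδ] with K hK1 hK2
      filter_upwards [tendsto_abs_sub_lt hL hδ,
        tendsto_abs_sub_lt (hcross w hw w' hw' K) hδ] with N hN1 hN2
      have hnorm : ‖Avg w N - Avg w' K‖ ^ 2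
          = ‖Avg w N‖ ^ 2 - 2 * ⟪Avg w N, Avg w' K⟫ + ‖Avg w' K‖ ^ 2 :=
        norm_sub_sq_real _ _
      have hsq : ‖Avg w N - Avg w' K‖ ^ 2 < ε ^ 2 := by
        rw [abs_lt] at hK1 hK2 hN1 hN2
        rw [hnorm]
        linarith [hK1.1, hK1.2, hK2.1, hK2.2, hN1.1, hN1.2, hN2.1, hN2.2]
      exact lt_of_pow_lt_pow_left₀ 2 hε.le hsq
    have hcauchy : ∀ w : ℝ → ℝ, IsWeight w → CauchySeq (Avg w) := by
      intro w hw
      rw [Metric.cauchySeq_iff]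
      intro ε hε
      obtain ⟨K, hK⟩ := (hkey w hw w hw (ε / 2) (by positivity)).exists
      obtain ⟨N₀, hN₀⟩ := eventually_atTop.mp hK
      refine ⟨N₀, fun m hm n hn => ?_⟩
      have e1 := hN₀ m hm
      have e2 := hN₀ n hn
      calc dist (Avg w m) (Avg w n)
          ≤ dist (Avg w m) (Avg w K) + dist (Avg w K) (Avg w n) := dist_triangle _ _ _
        _ < ε := by
            rw [dist_eq_norm, dist_eq_norm, norm_sub_rev (Avg w K)]
            linarith
    obtain ⟨bl, hbl⟩ := cauchySeq_tendsto_of_complete (hcauchy _ isWeight_one)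
    have htend : ∀ w : ℝ → ℝ, IsWeight w → Tendsto (Avg w) atTop (𝓝 bl) := by
      intro w hw
      rw [Metric.tendsto_atTop]
      intro ε hε
      have hbl' : ∀ᶠ K in atTop, dist (Avg (fun _ => 1) K) bl < ε / 2 := by
        rcases Metric.tendsto_atTop.mp hbl (ε / 2) (by positivity) with ⟨K₀, hK₀⟩
        exact eventually_atTop.mpr ⟨K₀, hK₀⟩
      obtain ⟨K, hK1, hK2⟩ := ((hkey w hw _ isWeight_one (ε / 2) (by positivity)).and hbl').exists
      obtain ⟨N₀, hN₀⟩ := eventually_atTop.mp hK1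
      refine ⟨N₀, fun n hn => ?_⟩
      have := hN₀ n hn
      calc dist (Avg w n) bl ≤ dist (Avg w n) (Avg (fun _ => 1) K)
            + dist (Avg (fun _ => 1) K) bl := dist_triangle _ _ _
        _ < ε := by rw [dist_eq_norm]; linarith
    have hcoe : ∀ (w : ℝ → ℝ) (N : ℕ), (⇑(Avg w N) : (Fin M → ℝ) → ℝ) =ᵐ[volume.restrict Q]
        fun y => (wsum w N)⁻¹ *
          (∑ n ∈ Finset.Icc 1 N, w ((n : ℝ) / (N : ℝ)) * b (U n y)) := by
      intro w N
      have e2 : (⇑(∑ n ∈ Finset.Icc 1 N, w ((n : ℝ) / (N : ℝ)) • F n) :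
            (Fin M → ℝ) → ℝ) =ᵐ[volume.restrict Q]
          fun y => ∑ n ∈ Finset.Icc 1 N, (w ((n : ℝ) / (N : ℝ)) • F n) y :=
        Lp_coeFn_finset_sum _ _
      have e3 : ∀ᵐ y ∂(volume.restrict Q), ∀ n ∈ Finset.Icc 1 N,
          (w ((n : ℝ) / (N : ℝ)) • F n) y = w ((n : ℝ) / (N : ℝ)) * b (U n y) := by
        rw [Filter.eventually_all_finset]
        intro n _
        filter_upwards [MeasureTheory.Lp.coeFn_smul (w ((n : ℝ) / (N : ℝ))) (F n),
          (hfL n).coeFn_toLp] with y d1 d2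
        rw [d1]; simp only [Pi.smul_apply, smul_eq_mul, hFdef, d2]
      simp only [hAvgdef]
      filter_upwards [MeasureTheory.Lp.coeFn_smul ((wsum w N)⁻¹)
        (∑ n ∈ Finset.Icc 1 N, w ((n : ℝ) / (N : ℝ)) • F n), e2, e3] with y e1' e2' e3'
      rw [e1']
      simp only [Pi.smul_apply, smul_eq_mul, e2']
      congr 1
      exact Finset.sum_congr rfl fun n hn => e3' n hn
    have habs : ∀ (w : ℝ → ℝ), IsWeight w → ∀ N : ℕ,
        ∀ᵐ y ∂(volume.restrict Q), |(Avg w N : (Fin M → ℝ) → ℝ) y| ≤ C := by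
      intro w hw N
      filter_upwards [hcoe w N] with y hy
      rw [hy]
      exact afun_bound (f := fun n y => b (U n y)) hw hC0 (fun n y => hCb _) N y
    have hblb : ∀ᵐ y ∂(volume.restrict Q), |bl y| ≤ C := by
      have hsm : AEStronglyMeasurable (fun y => max (|bl y| - C) 0) (volume.restrict Q) := by
        have ha : AEMeasurable (⇑bl) (volume.restrict Q) :=
          (Lp.aestronglyMeasurable bl).aemeasurable
        exact (((continuous_abs.measurable.comp_aemeasurable ha).sub aemeasurable_const).max
          aemeasurable_const).aestronglyMeasurable
      have hle0 : ∀ N : ℕ, eLpNorm (fun y => max (|bl y| - C) 0) 2 (volume.restrict Q)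
          ≤ ENNReal.ofReal (dist (Avg (fun _ => 1) N) bl) := by
        intro N
        have hb1 : eLpNorm (fun y => max (|bl y| - C) 0) 2 (volume.restrict Q)
            ≤ eLpNorm (⇑bl - ⇑(Avg (fun _ => 1) N)) 2 (volume.restrict Q) := by
          apply eLpNorm_mono_ae
          filter_upwards [habs _ isWeight_one N] with y hy
          have h2 := abs_sub_abs_le_abs_sub (bl y) ((Avg (fun _ => 1) N) y)
          simp only [Pi.sub_apply, Real.norm_eq_abs]
          rw [abs_of_nonneg (le_max_right _ _)]
          exact max_le (by linarith) (abs_nonneg _)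
        have hne : eLpNorm (⇑bl - ⇑(Avg (fun _ => 1) N)) 2 (volume.restrict Q) ≠ ⊤ := by
          rw [← eLpNorm_congr_ae (Lp.coeFn_sub bl (Avg (fun _ => 1) N))]
          exact Lp.eLpNorm_ne_top _
        have hb2 : eLpNorm (⇑bl - ⇑(Avg (fun _ => 1) N)) 2 (volume.restrict Q)
            = ENNReal.ofReal (dist (Avg (fun _ => 1) N) bl) := by
          rw [dist_comm, Lp.dist_def, ENNReal.ofReal_toReal hne]
        exact le_trans hb1 (le_of_eq hb2)
      have hz : eLpNorm (fun y => max (|bl y| - C) 0) 2 (volume.restrict Q) = 0 := by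
        have htd : Tendsto (fun N => ENNReal.ofReal (dist (Avg (fun _ => 1) N) bl))
            atTop (𝓝 0) := by
          have h0 := tendsto_iff_dist_tendsto_zero.mp hbl
          have h1 := ENNReal.tendsto_ofReal h0
          simpa using h1
        exact le_antisymm (ge_of_tendsto' htd hle0) bot_le
      have h0 : (fun y => max (|bl y| - C) 0) =ᵐ[volume.restrict Q] 0 :=
        (eLpNorm_eq_zero_iff hsm two_ne_zero).mp hz
      filter_upwards [h0] with y hy
      have h2 : max (|bl y| - C) 0 = 0 := hy
      have h3 := le_max_left (|bl y| - C) (0 : ℝ)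
      rw [h2] at h3
      linarith
    set g₀ : (Fin M → ℝ) → ℝ := (Lp.aestronglyMeasurable bl).mk ⇑bl with hg₀def
    have hg₀m : Measurable g₀ := (Lp.aestronglyMeasurable bl).stronglyMeasurable_mk.measurable
    have hg₀ae : ⇑bl =ᵐ[volume.restrict Q] g₀ := (Lp.aestronglyMeasurable bl).ae_eq_mk
    refine ⟨fun y => max (-C) (min C (g₀ y)), ?_, ⟨C, fun y => ?_⟩, ?_⟩
    · exact measurable_const.max (measurable_const.min hg₀m)
    · rw [abs_le]
      exact ⟨le_max_left _ _, max_le (by linarith) (min_le_left _ _)⟩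
    · intro w hw
      have hbeq : (fun y => max (-C) (min C (g₀ y))) =ᵐ[volume.restrict Q] ⇑bl := by
        filter_upwards [hg₀ae, hblb] with y e1 e2
        rw [← e1]
        rcases abs_le.mp e2 with ⟨d1, d2⟩
        rw [min_eq_right d2, max_eq_right d1]
      have hJ : ∀ N : ℕ, (∫ y in Q, |(wsum w N)⁻¹ *
            (∑ n ∈ Finset.Icc 1 N, w ((n : ℝ) / (N : ℝ)) * b (U n y))
              - max (-C) (min C (g₀ y))|)
          = ∫ y, |(Avg w N) y - bl y| ∂(volume.restrict Q) := by
        intro N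
        apply integral_congr_ae
        filter_upwards [hcoe w N, hbeq] with y e1 e2
        rw [← e1, e2]
      have hsq : Tendsto (fun N => ∫ y, |(Avg w N) y - bl y| ∂(volume.restrict Q))
          atTop (𝓝 0) := by
        apply squeeze_zero (fun N => integral_nonneg fun y => abs_nonneg _)
          (fun N => integral_abs_le_dist (Avg w N) bl)
        have h0 := tendsto_iff_dist_tendsto_zero.mp (htend w hw)
        simpa using h0.mul_const ((((volume.restrict Q) Set.univ) ^ ((1 : ℝ) / 2)).toReal)
      exact hsq.congr fun N => (hJ N).symm
  · intro hR b hbc hbs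
    obtain ⟨C₀, hC₀⟩ := hbs.exists_bound_of_continuous hbc
    set C : ℝ := max C₀ 0 with hCdef
    have hC0 : (0 : ℝ) ≤ C := le_max_right _ _
    have hCb : ∀ x, |b x| ≤ C := fun x =>
      le_trans (by simpa [Real.norm_eq_abs] using hC₀ x) (le_max_left _ _)
    obtain ⟨bbar, hbm, ⟨C', hC'⟩, hconv⟩ := hR b hbc hbs
    have hC'0 : (0 : ℝ) ≤ C' := le_trans (abs_nonneg _) (hC' 0)
    have hfm : ∀ n, Measurable (fun y => b (U n y)) := fun n => hbc.measurable.comp (hU n)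
    have hmul_int : ∀ u v : (Fin M → ℝ) → ℝ, Measurable u → Measurable v →
        ∀ Cu Cv : ℝ, (∀ y, |u y| ≤ Cu) → (∀ y, |v y| ≤ Cv) →
        Integrable (fun y => u y * v y) (volume.restrict Q) := by
      intro u v hu hv Cu Cv hCu hCv
      refine memLp_one_iff_integrable.mp (MemLp.of_bound
        ((hu.mul hv).aestronglyMeasurable) (Cu * Cv) (ae_of_all _ fun y => ?_))
      rw [Real.norm_eq_abs, abs_mul]
      exact mul_le_mul (hCu y) (hCv y) (abs_nonneg _) (le_trans (abs_nonneg _) (hCu y))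
    have hbdd_int : ∀ u : (Fin M → ℝ) → ℝ, Measurable u → ∀ Cu : ℝ, (∀ y, |u y| ≤ Cu) →
        Integrable u (volume.restrict Q) := by
      intro u hu Cu hCu
      refine memLp_one_iff_integrable.mp (MemLp.of_bound hu.aestronglyMeasurable Cu
        (ae_of_all _ fun y => ?_))
      rw [Real.norm_eq_abs]; exact hCu y
    have hAm : ∀ (w : ℝ → ℝ) (N : ℕ), Measurable (fun y => (wsum w N)⁻¹ *
        ∑ n ∈ Finset.Icc 1 N, w ((n : ℝ) / (N : ℝ)) * b (U n y)) := by
      intro w N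
      exact (Finset.measurable_sum _ fun n _ => (hfm n).const_mul _).const_mul _
    have hmain : ∀ w : ℝ → ℝ, IsWeight w → ∀ g : (Fin M → ℝ) → ℝ, Measurable g →
        ∀ Cg : ℝ, (∀ y, |g y| ≤ Cg) →
        Tendsto (fun N : ℕ => ∫ y in Q, ((wsum w N)⁻¹ *
            ∑ n ∈ Finset.Icc 1 N, w ((n : ℝ) / (N : ℝ)) * b (U n y)) * g y) atTop
          (𝓝 (∫ y in Q, bbar y * g y)) := by
      intro w hw g hg Cg hCg
      have hCg0 : (0 : ℝ) ≤ Cg := le_trans (abs_nonneg _) (hCg 0)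
      have hAb : ∀ N y, |(wsum w N)⁻¹ *
          ∑ n ∈ Finset.Icc 1 N, w ((n : ℝ) / (N : ℝ)) * b (U n y)| ≤ C := fun N y =>
        afun_bound (f := fun n y => b (U n y)) hw hC0 (fun n y => hCb _) N y
      rw [← tendsto_sub_nhds_zero_iff]
      apply squeeze_zero_norm (a := fun N : ℕ => (∫ y in Q, |(wsum w N)⁻¹ *
          (∑ n ∈ Finset.Icc 1 N, w ((n : ℝ) / (N : ℝ)) * b (U n y)) - bbar y|) * Cg)
      · intro N
        have hAint : Integrable (fun y => ((wsum w N)⁻¹ *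
            ∑ n ∈ Finset.Icc 1 N, w ((n : ℝ) / (N : ℝ)) * b (U n y)) * g y)
            (volume.restrict Q) := hmul_int _ g (hAm w N) hg C Cg (hAb N) hCg
        have hbint : Integrable (fun y => bbar y * g y) (volume.restrict Q) :=
          hmul_int _ g hbm hg C' Cg hC' hCg
        rw [← integral_sub hAint hbint]
        have hmono : (∫ y in Q, ‖((wsum w N)⁻¹ *
            ∑ n ∈ Finset.Icc 1 N, w ((n : ℝ) / (N : ℝ)) * b (U n y)) * g y - bbar y * g y‖)
            ≤ ∫ y in Q, |((wsum w N)⁻¹ *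
              ∑ n ∈ Finset.Icc 1 N, w ((n : ℝ) / (N : ℝ)) * b (U n y)) - bbar y| * Cg := by
          refine integral_mono (hAint.sub hbint).norm
            ((((hbdd_int _ (hAm w N) C (hAb N)).sub (hbdd_int bbar hbm C' hC')).abs).mul_const Cg)
            fun y => ?_
          simp only [Real.norm_eq_abs]
          have e : ((wsum w N)⁻¹ *
              ∑ n ∈ Finset.Icc 1 N, w ((n : ℝ) / (N : ℝ)) * b (U n y)) * g y - bbar y * g y
              = (((wsum w N)⁻¹ *
                ∑ n ∈ Finset.Icc 1 N, w ((n : ℝ) / (N : ℝ)) * b (U n y)) - bbar y) * g y := by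
            ring
          rw [e, abs_mul]
          exact mul_le_mul_of_nonneg_left (hCg y) (abs_nonneg _)
        calc ‖∫ y in Q, (((wsum w N)⁻¹ *
              ∑ n ∈ Finset.Icc 1 N, w ((n : ℝ) / (N : ℝ)) * b (U n y)) * g y - bbar y * g y)‖
            ≤ ∫ y in Q, ‖((wsum w N)⁻¹ *
              ∑ n ∈ Finset.Icc 1 N, w ((n : ℝ) / (N : ℝ)) * b (U n y)) * g y - bbar y * g y‖ :=
              norm_integral_le_integral_norm _
          _ ≤ ∫ y in Q, |((wsum w N)⁻¹ *
              ∑ n ∈ Finset.Icc 1 N, w ((n : ℝ) / (N : ℝ)) * b (U n y)) - bbar y| * Cg := hmono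
          _ = (∫ y in Q, |((wsum w N)⁻¹ *
              (∑ n ∈ Finset.Icc 1 N, w ((n : ℝ) / (N : ℝ)) * b (U n y))) - bbar y|) * Cg :=
              integral_mul_const _ _
      · simpa using (hconv w hw).mul_const Cg
    have hsym : ∀ n m : ℕ, (∫ y in Q, b (U n y) * b (U m y))
        = ∫ y in Q, b (U m y) * b (U n y) := fun n m =>
      integral_congr_ae (Filter.Eventually.of_forall fun y => mul_comm _ _)
    have hfgint : ∀ n m : ℕ, Integrable (fun y => b (U n y) * b (U m y))
        (volume.restrict Q) := fun n m =>
      hmul_int _ _ (hfm n) (hfm m) C C (fun y => hCb _) (fun y => hCb _)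
    refine ⟨fun m => ∫ y in Q, bbar y * b (U m y), fun w hw m _ => ?_, fun w hw => ?_⟩
    · have h := hmain w hw (fun y => b (U m y)) (hfm m) C (fun y => hCb _)
      exact h.congr fun N => (expand_aux w N (fun n y => b (U n y)) (fun y => b (U m y))
        (fun n => hfgint n m)).symm
    · refine ⟨∫ y in Q, bbar y * bbar y, ?_, ?_⟩
      · -- double sums converge to ∫ bbar * bbar
        have heq : ∀ N : ℕ, ((wsum w N) ^ 2)⁻¹ *
            ∑ n ∈ Finset.Icc 1 N, ∑ m ∈ Finset.Icc 1 N,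
              w ((n : ℝ) / (N : ℝ)) * w ((m : ℝ) / (N : ℝ)) *
                ∫ y in Q, b (U n y) * b (U m y)
            = ∫ y in Q, ((wsum w N)⁻¹ *
                ∑ n ∈ Finset.Icc 1 N, w ((n : ℝ) / (N : ℝ)) * b (U n y)) *
              ((wsum w N)⁻¹ *
                ∑ n ∈ Finset.Icc 1 N, w ((n : ℝ) / (N : ℝ)) * b (U n y)) := by
          intro N
          have hAb : ∀ y, |(wsum w N)⁻¹ *
              ∑ n ∈ Finset.Icc 1 N, w ((n : ℝ) / (N : ℝ)) * b (U n y)| ≤ C := fun y =>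
            afun_bound (f := fun n y => b (U n y)) hw hC0 (fun n y => hCb _) N y
          calc ((wsum w N) ^ 2)⁻¹ *
              ∑ n ∈ Finset.Icc 1 N, ∑ m ∈ Finset.Icc 1 N,
                w ((n : ℝ) / (N : ℝ)) * w ((m : ℝ) / (N : ℝ)) *
                  ∫ y in Q, b (U n y) * b (U m y)
              = (wsum w N)⁻¹ * ∑ n ∈ Finset.Icc 1 N, w ((n : ℝ) / (N : ℝ)) *
                  ((wsum w N)⁻¹ * ∑ m ∈ Finset.Icc 1 N, w ((m : ℝ) / (N : ℝ)) *
                    ∫ y in Q, b (U m y) * b (U n y)) := by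
                simp only [Finset.mul_sum]
                refine Finset.sum_congr rfl fun n _ => Finset.sum_congr rfl fun m _ => ?_
                rw [hsym n m]; ring
            _ = (wsum w N)⁻¹ * ∑ n ∈ Finset.Icc 1 N, w ((n : ℝ) / (N : ℝ)) *
                  ∫ y in Q, b (U n y) * (((wsum w N)⁻¹ *
                    ∑ k ∈ Finset.Icc 1 N, w ((k : ℝ) / (N : ℝ)) * b (U k y))) := by
                congr 1
                refine Finset.sum_congr rfl fun n _ => ?_
                congr 1
                rw [expand_aux w N (fun m y => b (U m y)) (fun y => b (U n y))
                  (fun m => hfgint m n)]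
                exact integral_congr_ae (Filter.Eventually.of_forall fun y => mul_comm _ _)
            _ = ∫ y in Q, ((wsum w N)⁻¹ *
                  ∑ n ∈ Finset.Icc 1 N, w ((n : ℝ) / (N : ℝ)) * b (U n y)) *
                ((wsum w N)⁻¹ *
                  ∑ n ∈ Finset.Icc 1 N, w ((n : ℝ) / (N : ℝ)) * b (U n y)) := by
                exact expand_aux w N (fun n y => b (U n y)) _
                  (fun n => hmul_int _ _ (hfm n) (hAm w N) C C (fun y => hCb _) hAb)
        rw [← tendsto_sub_nhds_zero_iff]
        apply squeeze_zero_norm (a := fun N : ℕ => (∫ y in Q, |(wsum w N)⁻¹ *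
            (∑ n ∈ Finset.Icc 1 N, w ((n : ℝ) / (N : ℝ)) * b (U n y)) - bbar y|) * (C + C'))
        · intro N
          rw [heq N]
          have hAb : ∀ y, |(wsum w N)⁻¹ *
              ∑ n ∈ Finset.Icc 1 N, w ((n : ℝ) / (N : ℝ)) * b (U n y)| ≤ C := fun y =>
            afun_bound (f := fun n y => b (U n y)) hw hC0 (fun n y => hCb _) N y
          have hAAint : Integrable (fun y => ((wsum w N)⁻¹ *
              ∑ n ∈ Finset.Icc 1 N, w ((n : ℝ) / (N : ℝ)) * b (U n y)) *
              ((wsum w N)⁻¹ *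
              ∑ n ∈ Finset.Icc 1 N, w ((n : ℝ) / (N : ℝ)) * b (U n y)))
              (volume.restrict Q) := hmul_int _ _ (hAm w N) (hAm w N) C C hAb hAb
          have hbbint : Integrable (fun y => bbar y * bbar y) (volume.restrict Q) :=
            hmul_int _ _ hbm hbm C' C' hC' hC'
          rw [← integral_sub hAAint hbbint]
          have hmono : (∫ y in Q, ‖((wsum w N)⁻¹ *
                ∑ n ∈ Finset.Icc 1 N, w ((n : ℝ) / (N : ℝ)) * b (U n y)) *
                ((wsum w N)⁻¹ *
                ∑ n ∈ Finset.Icc 1 N, w ((n : ℝ) / (N : ℝ)) * b (U n y))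
                - bbar y * bbar y‖)
              ≤ ∫ y in Q, |((wsum w N)⁻¹ *
                ∑ n ∈ Finset.Icc 1 N, w ((n : ℝ) / (N : ℝ)) * b (U n y)) - bbar y|
                  * (C + C') := by
            refine integral_mono (hAAint.sub hbbint).norm
              ((((hbdd_int _ (hAm w N) C hAb).sub
                (hbdd_int bbar hbm C' hC')).abs).mul_const (C + C')) fun y => ?_
            simp only [Real.norm_eq_abs]
            set A := (wsum w N)⁻¹ *
              ∑ n ∈ Finset.Icc 1 N, w ((n : ℝ) / (N : ℝ)) * b (U n y) with hA
            have e : A * A - bbar y * bbar y = (A - bbar y) * A + bbar y * (A - bbar y) := by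
              ring
            calc |A * A - bbar y * bbar y|
                = |(A - bbar y) * A + bbar y * (A - bbar y)| := by rw [e]
              _ ≤ |(A - bbar y) * A| + |bbar y * (A - bbar y)| := abs_add_le _ _
              _ = |A - bbar y| * |A| + |bbar y| * |A - bbar y| := by
                  rw [abs_mul (A - bbar y) A, abs_mul (bbar y) (A - bbar y)]
              _ ≤ |A - bbar y| * C + C' * |A - bbar y| :=
                  add_le_add (mul_le_mul_of_nonneg_left (hAb y) (abs_nonneg _))
                    (mul_le_mul_of_nonneg_right (hC' y) (abs_nonneg _))
              _ = |A - bbar y| * (C + C') := by ring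
          calc ‖∫ y in Q, (((wsum w N)⁻¹ *
                ∑ n ∈ Finset.Icc 1 N, w ((n : ℝ) / (N : ℝ)) * b (U n y)) *
                ((wsum w N)⁻¹ *
                ∑ n ∈ Finset.Icc 1 N, w ((n : ℝ) / (N : ℝ)) * b (U n y))
                - bbar y * bbar y)‖
              ≤ ∫ y in Q, ‖((wsum w N)⁻¹ *
                ∑ n ∈ Finset.Icc 1 N, w ((n : ℝ) / (N : ℝ)) * b (U n y)) *
                ((wsum w N)⁻¹ *
                ∑ n ∈ Finset.Icc 1 N, w ((n : ℝ) / (N : ℝ)) * b (U n y))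
                - bbar y * bbar y‖ := norm_integral_le_integral_norm _
            _ ≤ ∫ y in Q, |((wsum w N)⁻¹ *
                ∑ n ∈ Finset.Icc 1 N, w ((n : ℝ) / (N : ℝ)) * b (U n y)) - bbar y|
                  * (C + C') := hmono
            _ = (∫ y in Q, |((wsum w N)⁻¹ *
                (∑ n ∈ Finset.Icc 1 N, w ((n : ℝ) / (N : ℝ)) * b (U n y))) - bbar y|)
                  * (C + C') := integral_mul_const _ _
        · simpa using (hconv w hw).mul_const (C + C')
      · -- weighted averages of ℓ converge to ∫ bbar * bbar
        have h := hmain w hw bbar hbm C' hC'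
        refine h.congr fun K => ?_
        calc (∫ y in Q, ((wsum w K)⁻¹ *
              ∑ n ∈ Finset.Icc 1 K, w ((n : ℝ) / (K : ℝ)) * b (U n y)) * bbar y)
            = (wsum w K)⁻¹ * ∑ m ∈ Finset.Icc 1 K, w ((m : ℝ) / (K : ℝ)) *
                ∫ y in Q, b (U m y) * bbar y :=
              (expand_aux w K (fun n y => b (U n y)) bbar
                (fun n => hmul_int _ _ (hfm n) hbm C C' (fun y => hCb _) hC')).symm
          _ = (wsum w K)⁻¹ * ∑ m ∈ Finset.Icc 1 K, w ((m : ℝ) / (K : ℝ)) *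
                ∫ y in Q, bbar y * b (U m y) := by
              congr 1
              refine Finset.sum_congr rfl fun m _ => ?_
              congr 1
              exact integral_congr_ae (Filter.Eventually.of_forall fun y => mul_comm _ _)
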